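/- Let A₁ and A₂ be two disjoint AO sets in G, and suppose A₂ is x̄_{A₁}-NO in G. Then for any pattern p, N(G*)p = 𝟏 if and only if N(G)p = x̄_{A₁∪A₂}. Moreover, A₁ and A₂ are AO in G*, and ν(G*) = ν(G). -/

import Mathlib

open Matrix
open scoped Classical

/-- The closed neighborhood matrix of a simple graph over `ℤ₂`:
`N(G) u v = 1` iff `u = v` or `u` is adjacent to `v`. -/
noncomputable def nbhdMatrix {V : Type*} [Fintype V] (G : SimpleGraph V) :
    Matrix V V (ZMod 2) :=
  Matrix.of fun u v => if u = v ∨ G.Adj u v then 1 else 0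

/-- The nullity of a matrix over `ℤ₂`: the dimension of its kernel. -/
noncomputable def nullityM {V : Type*} [Fintype V] (M : Matrix V V (ZMod 2)) : ℕ :=
  Module.finrank (ZMod 2) (LinearMap.ker M.mulVecLin)

/-- The nullity `ν(G)` of a graph. -/
noncomputable def graphNullity {V : Type*} [Fintype V] (G : SimpleGraph V) : ℕ :=
  nullityM (nbhdMatrix G)

/-- Characteristic vector of a set of vertices. -/
noncomputable def chi {V : Type*} (A : Set V) : V → ZMod 2 :=
  fun v => if v ∈ A then 1 else 0

/-- A configuration `c` is solvable (w.r.t. the matrix `M`) if `M p = c` for some pattern `p`. -/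
def Solv {V : Type*} [Fintype V] (M : Matrix V V (ZMod 2)) (c : V → ZMod 2) : Prop :=
  ∃ p : V → ZMod 2, M.mulVec p = c

/-- `A` is `c`-always odd activated: `A` is solvable and `x_A · p = 1` for every solving
pattern `p` for `c`. -/
def cAO {V : Type*} [Fintype V] (M : Matrix V V (ZMod 2)) (c : V → ZMod 2)
    (A : Set V) : Prop :=
  Solv M (chi A) ∧ ∀ p : V → ZMod 2, M.mulVec p = c → chi A ⬝ᵥ p = 1

/-- `A` is `c`-never odd activated: `A` is solvable and `x_A · p = 0` for every solving
pattern `p` for `c`. -/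
def cNO {V : Type*} [Fintype V] (M : Matrix V V (ZMod 2)) (c : V → ZMod 2)
    (A : Set V) : Prop :=
  Solv M (chi A) ∧ ∀ p : V → ZMod 2, M.mulVec p = c → chi A ⬝ᵥ p = 0

/-- `A` is always odd activated (AO): `𝟏`-always odd activated. -/
def AO {V : Type*} [Fintype V] (M : Matrix V V (ZMod 2)) (A : Set V) : Prop :=
  cAO M 1 A

/-- `A` is never odd activated (NO): `𝟏`-never odd activated. -/
def NO {V : Type*} [Fintype V] (M : Matrix V V (ZMod 2)) (A : Set V) : Prop :=
  cNO M 1 A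

/-- `A` is half odd activated (HO): `x_A` is not solvable. -/
def HO {V : Type*} [Fintype V] (M : Matrix V V (ZMod 2)) (A : Set V) : Prop :=
  ¬ Solv M (chi A)

/-- The closed neighborhood matrix of the graph `G*` obtained from `G` by toggling every
pair of vertices between the disjoint sets `A₁` and `A₂`:
`N(G*) = N(G) + x_{A₁} x_{A₂}ᵗ + x_{A₂} x_{A₁}ᵗ` over `ℤ₂`. -/
noncomputable def starMatrix {V : Type*} [Fintype V] (G : SimpleGraph V)
    (A₁ A₂ : Set V) : Matrix V V (ZMod 2) :=
  nbhdMatrix G + Matrix.vecMulVec (chi A₁) (chi A₂) + Matrix.vecMulVec (chi A₂) (chi A₁)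

set_option linter.unusedSectionVars false
section helpers
variable {V : Type*} [Fintype V]


lemma nbhd_symm (G : SimpleGraph V) : (nbhdMatrix G)ᵀ = nbhdMatrix G := by
  ext u v
  simp only [Matrix.transpose_apply, nbhdMatrix, Matrix.of_apply]
  rw [eq_comm (a := v), G.adj_comm]

lemma nbhd_diag (G : SimpleGraph V) (v : V) : nbhdMatrix G v v = 1 := by
  simp [nbhdMatrix]

lemma symm_dot (G : SimpleGraph V) (a b : V → ZMod 2) :
    a ⬝ᵥ (nbhdMatrix G).mulVec b = b ⬝ᵥ (nbhdMatrix G).mulVec a := by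
  rw [Matrix.dotProduct_mulVec, ← Matrix.mulVec_transpose, nbhd_symm, dotProduct_comm]

lemma quad (G : SimpleGraph V) (x : V → ZMod 2) :
    x ⬝ᵥ (nbhdMatrix G).mulVec x = (1 : V → ZMod 2) ⬝ᵥ x := by
  classical
  have expand : x ⬝ᵥ (nbhdMatrix G).mulVec x
      = ∑ p ∈ (Finset.univ ×ˢ Finset.univ : Finset (V × V)),
          x p.1 * (nbhdMatrix G p.1 p.2 * x p.2) := by
    rw [Finset.sum_product]
    simp [dotProduct, Matrix.mulVec, Finset.mul_sum]
  rw [expand, ← Finset.diag_union_offDiag (Finset.univ : Finset V),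
    Finset.sum_union (Finset.disjoint_diag_offDiag _)]
  have hoff : ∑ p ∈ (Finset.univ : Finset V).offDiag,
      x p.1 * (nbhdMatrix G p.1 p.2 * x p.2) = 0 := by
    apply Finset.sum_involution (g := fun p _ => (p.2, p.1))
    · intro p hp
      have hsym : nbhdMatrix G p.2 p.1 = nbhdMatrix G p.1 p.2 := by
        simp only [nbhdMatrix, Matrix.of_apply]
        rw [eq_comm (a := p.2), G.adj_comm]
      have h2 : (2 : ZMod 2) = 0 := by decide
      rw [hsym]
      ring_nf
      rw [h2, mul_zero]
    · intro p hp h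
      rw [Finset.mem_offDiag] at hp
      intro hc
      exact hp.2.2 (congrArg Prod.snd hc)
    · intro p hp
      rw [Finset.mem_offDiag] at hp ⊢
      exact ⟨Finset.mem_univ _, Finset.mem_univ _, fun h => hp.2.2 h.symm⟩
    · intro p hp; rfl
  rw [hoff, add_zero]
  rw [Finset.sum_diag]
  have hsq : ∀ a : ZMod 2, a * a = a := by decide
  simp [nbhd_diag, dotProduct, hsq]

lemma sutner (G : SimpleGraph V) : ∃ s, (nbhdMatrix G).mulVec s = 1 := by
  classical
  by_contra h
  push_neg at h
  set M := nbhdMatrix G with hM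
  set W := LinearMap.range M.mulVecLin with hW
  have h1 : (1 : V → ZMod 2) ∉ W := by
    rintro ⟨s, hs⟩
    exact h s hs
  have hq1 : W.mkQ 1 ≠ 0 := by
    rw [Submodule.mkQ_apply, ne_eq, Submodule.Quotient.mk_eq_zero]
    exact h1
  obtain ⟨φ, hφ⟩ : ∃ φ : Module.Dual (ZMod 2) ((V → ZMod 2) ⧸ W), φ (W.mkQ 1) ≠ 0 := by
    by_contra hc
    push_neg at hc
    exact hq1 ((Module.forall_dual_apply_eq_zero_iff (ZMod 2) _).mp hc)
  set F : (V → ZMod 2) →ₗ[ZMod 2] ZMod 2 := φ.comp W.mkQ with hF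
  have hFW : ∀ y ∈ W, F y = 0 := by
    intro y hy
    simp [hF, (Submodule.Quotient.mk_eq_zero W).mpr hy]
  have hF1 : F 1 ≠ 0 := hφ
  set k : V → ZMod 2 := fun v => F (fun j => if v = j then 1 else 0) with hk
  have hrep : ∀ x : V → ZMod 2, F x = k ⬝ᵥ x := by
    intro x
    conv_lhs => rw [pi_eq_sum_univ x]
    rw [map_sum]
    simp only [_root_.map_smul, smul_eq_mul]
    rw [dotProduct]
    congr 1
    ext v
    rw [hk, mul_comm]
  have hker : M.mulVec k = 0 := by
    have hvm : ∀ x, (Matrix.vecMul k M) ⬝ᵥ x = 0 := by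
      intro x
      rw [← Matrix.dotProduct_mulVec, ← hrep]
      exact hFW _ ⟨x, rfl⟩
    have : Matrix.vecMul k M = 0 := by
      ext v
      have := hvm (fun j => if v = j then 1 else 0)
      simpa [dotProduct, Finset.sum_ite_eq] using this
    rw [hM, ← nbhd_symm G, Matrix.mulVec_transpose, ← hM]
    exact this
  have hzero : (1 : V → ZMod 2) ⬝ᵥ k = 0 := by
    rw [← quad G k, hker, dotProduct_zero]
  apply hF1
  rw [hrep, dotProduct_comm]
  exact hzero



lemma chi_union_disj {A₁ A₂ : Set V} (hd : Disjoint A₁ A₂) :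
    chi (A₁ ∪ A₂) = chi A₁ + chi A₂ := by
  funext v
  simp only [chi, Pi.add_apply, Set.mem_union]
  by_cases h1 : v ∈ A₁
  · have h2 : v ∉ A₂ := fun h => (Set.disjoint_left.mp hd h1) h
    simp [h1, h2]
  · by_cases h2 : v ∈ A₂ <;> simp [h1, h2]

lemma vecMulVec_mulVec (a b p : V → ZMod 2) :
    (Matrix.vecMulVec a b).mulVec p = (b ⬝ᵥ p) • a := by
  funext u
  simp only [Matrix.mulVec, Matrix.vecMulVec_apply, dotProduct, Pi.smul_apply, smul_eq_mul]
  rw [Finset.sum_mul]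
  congr 1
  funext v
  ring


end helpers

/-- Proposition (AO, AO, `x̄_{A₁}`-NO): the odd dominating patterns of `G*` are exactly
the solving patterns of `x̄_{A₁∪A₂}` in `G`; `A₁` and `A₂` are AO in `G*`, and
`ν(G*) = ν(G)`. -/
theorem stmt14 {V : Type*} [Fintype V] (G : SimpleGraph V) (A₁ A₂ : Set V)
    (hd : Disjoint A₁ A₂)
    (h1 : AO (nbhdMatrix G) A₁) (h2 : AO (nbhdMatrix G) A₂)
    (h3 : cNO (nbhdMatrix G) (chi A₁ + 1) A₂) :
    (∀ p : V → ZMod 2, (starMatrix G A₁ A₂).mulVec p = 1 ↔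
      (nbhdMatrix G).mulVec p = chi (A₁ ∪ A₂) + 1) ∧
    AO (starMatrix G A₁ A₂) A₁ ∧ AO (starMatrix G A₁ A₂) A₂ ∧
    nullityM (starMatrix G A₁ A₂) = nullityM (nbhdMatrix G) := by
  
  obtain ⟨⟨r, hr⟩, hAO1⟩ := h1
  obtain ⟨⟨q, hq⟩, hAO2⟩ := h2
  obtain ⟨-, hNO⟩ := h3
  obtain ⟨s, hs⟩ := sutner G
  have σ1 : chi A₁ ⬝ᵥ s = 1 := hAO1 s hs
  have σ2 : chi A₂ ⬝ᵥ s = 1 := hAO2 s hs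
  -- ρ : sum of r = χ₁ ⬝ r = 1
  have ρ : chi A₁ ⬝ᵥ r = 1 := by
    have : chi A₁ ⬝ᵥ r = chi A₁ ⬝ᵥ s := by
      calc chi A₁ ⬝ᵥ r = r ⬝ᵥ ((nbhdMatrix G) *ᵥ r) := by rw [hr]; exact dotProduct_comm _ _
        _ = 1 ⬝ᵥ r := quad G r
        _ = r ⬝ᵥ ((nbhdMatrix G) *ᵥ s) := by rw [hs]; exact dotProduct_comm _ _
        _ = s ⬝ᵥ ((nbhdMatrix G) *ᵥ r) := symm_dot G r s
        _ = chi A₁ ⬝ᵥ s := by rw [hr]; exact dotProduct_comm _ _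
    rw [this, σ1]
  have κ : chi A₂ ⬝ᵥ q = 1 := by
    have : chi A₂ ⬝ᵥ q = chi A₂ ⬝ᵥ s := by
      calc chi A₂ ⬝ᵥ q = q ⬝ᵥ ((nbhdMatrix G) *ᵥ q) := by rw [hq]; exact dotProduct_comm _ _
        _ = 1 ⬝ᵥ q := quad G q
        _ = q ⬝ᵥ ((nbhdMatrix G) *ᵥ s) := by rw [hs]; exact dotProduct_comm _ _
        _ = s ⬝ᵥ ((nbhdMatrix G) *ᵥ q) := symm_dot G q s
        _ = chi A₂ ⬝ᵥ s := by rw [hq]; exact dotProduct_comm _ _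
    rw [this, σ2]
  have α1 : chi A₂ ⬝ᵥ r = 1 := by
    have hsr : (nbhdMatrix G) *ᵥ (s + r) = chi A₁ + 1 := by
      rw [Matrix.mulVec_add, hs, hr]
      funext v
      simp only [Pi.add_apply, Pi.one_apply]
      have : ∀ a : ZMod 2, 1 + a = a + 1 := by decide
      exact this _
    have h0 := hNO (s + r) hsr
    rw [dotProduct_add, σ2] at h0
    have : ∀ x : ZMod 2, 1 + x = 0 → x = 1 := by decide
    exact this _ h0
  have α2 : chi A₁ ⬝ᵥ q = 1 := by
    calc chi A₁ ⬝ᵥ q = q ⬝ᵥ ((nbhdMatrix G) *ᵥ r) := by rw [hr]; exact dotProduct_comm _ _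
      _ = r ⬝ᵥ ((nbhdMatrix G) *ᵥ q) := symm_dot G q r
      _ = chi A₂ ⬝ᵥ r := by rw [hq]; exact dotProduct_comm _ _
      _ = 1 := α1
  have hstar : ∀ p : V → ZMod 2, (starMatrix G A₁ A₂) *ᵥ p =
      (nbhdMatrix G) *ᵥ p + (chi A₂ ⬝ᵥ p) • chi A₁ + (chi A₁ ⬝ᵥ p) • chi A₂ := by
    intro p
    simp only [starMatrix, Matrix.add_mulVec, _root_.vecMulVec_mulVec]
  -- key: solving patterns for χ(A₁∪A₂)+1 activate both A₁ and A₂ oddly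
  have key : ∀ p : V → ZMod 2, (nbhdMatrix G) *ᵥ p = chi (A₁ ∪ A₂) + 1 →
      chi A₁ ⬝ᵥ p = 1 ∧ chi A₂ ⬝ᵥ p = 1 := by
    intro p hp
    rw [chi_union_disj hd] at hp
    have hw : (nbhdMatrix G) *ᵥ (p + q + r) = 1 := by
      rw [Matrix.mulVec_add, Matrix.mulVec_add, hp, hq, hr]
      funext v
      simp only [Pi.add_apply, Pi.one_apply]
      have : ∀ a b : ZMod 2, (a + b + 1) + b + a = 1 := by decide
      exact this _ _
    have e1 := hAO1 _ hw
    have e2 := hAO2 _ hw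
    rw [dotProduct_add, dotProduct_add, α2, ρ] at e1
    rw [dotProduct_add, dotProduct_add, κ, α1] at e2
    have hz : ∀ x : ZMod 2, x + 1 + 1 = 1 → x = 1 := by decide
    exact ⟨hz _ e1, hz _ e2⟩
  have Z : ∀ x : ZMod 2, x = 0 ∨ x = 1 := by decide
  have hiff : ∀ p : V → ZMod 2, (starMatrix G A₁ A₂).mulVec p = 1 ↔
      (nbhdMatrix G).mulVec p = chi (A₁ ∪ A₂) + 1 := by
    intro p
    constructor
    · intro hp
      have hm : (nbhdMatrix G) *ᵥ p =
          1 + (chi A₂ ⬝ᵥ p) • chi A₁ + (chi A₁ ⬝ᵥ p) • chi A₂ := by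
        have hh := hstar p
        rw [hp] at hh
        funext v
        have hv := congrFun hh v
        simp only [Pi.add_apply, Pi.smul_apply, Pi.one_apply, smul_eq_mul] at hv ⊢
        have : ∀ a b c : ZMod 2, 1 = a + b + c → a = 1 + b + c := by decide
        exact this _ _ _ hv
      rcases Z (chi A₁ ⬝ᵥ p) with he1 | he1 <;> rcases Z (chi A₂ ⬝ᵥ p) with he2 | he2
      · -- ε₁ = 0, ε₂ = 0 : Mp = 1, AO gives ε₁ = 1
        rw [he1, he2, zero_smul, zero_smul, add_zero, add_zero] at hm
        rw [hAO1 p hm] at he1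
        exact absurd he1 one_ne_zero
      · -- ε₁ = 0, ε₂ = 1 : Mp = χ₁ + 1, NO gives ε₂ = 0
        rw [he1, he2, one_smul, zero_smul, add_zero] at hm
        have hm' : (nbhdMatrix G) *ᵥ p = chi A₁ + 1 := by rw [hm, add_comm]
        rw [hNO p hm'] at he2
        exact absurd he2.symm one_ne_zero
      · -- ε₁ = 1, ε₂ = 0 : Mp = χ₂ + 1
        rw [he1, he2, one_smul, zero_smul, add_zero] at hm
        have hw : (nbhdMatrix G) *ᵥ (p + q) = 1 := by
          rw [Matrix.mulVec_add, hm, hq]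
          funext v
          simp only [Pi.add_apply, Pi.one_apply]
          have : ∀ a : ZMod 2, 1 + a + a = 1 := by decide
          exact this _
        have e1 := hAO1 _ hw
        rw [dotProduct_add, he1, α2] at e1
        exact absurd e1 (by decide)
      · -- ε₁ = 1, ε₂ = 1
        rw [he1, he2, one_smul, one_smul] at hm
        rw [hm, chi_union_disj hd]
        funext v
        simp only [Pi.add_apply, Pi.one_apply]
        have : ∀ a b : ZMod 2, 1 + a + b = a + b + 1 := by decide
        exact this _ _
    · intro hp
      obtain ⟨e1, e2⟩ := key p hp
      rw [hstar p, hp, e1, e2, chi_union_disj hd, one_smul, one_smul]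
      funext v
      simp only [Pi.add_apply, Pi.one_apply]
      have : ∀ a b : ZMod 2, a + b + 1 + a + b = 1 := by decide
      exact this _ _
  refine ⟨hiff, ⟨⟨q, ?_⟩, fun p hp => (key p ((hiff p).mp hp)).1⟩,
    ⟨⟨r, ?_⟩, fun p hp => (key p ((hiff p).mp hp)).2⟩, ?_⟩
  · rw [hstar q, hq, α2, κ, one_smul, one_smul]
    funext v
    simp only [Pi.add_apply]
    have : ∀ a b : ZMod 2, b + a + b = a := by decide
    exact this _ _
  · rw [hstar r, hr, ρ, α1, one_smul, one_smul]
    funext v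
    simp only [Pi.add_apply]
    have : ∀ a b : ZMod 2, a + a + b = b := by decide
    exact this _ _
  · -- nullity
    have hker : LinearMap.ker (starMatrix G A₁ A₂).mulVecLin
        = LinearMap.ker (nbhdMatrix G).mulVecLin := by
      ext k
      simp only [LinearMap.mem_ker, Matrix.mulVecLin_apply]
      constructor
      · intro hk
        have hm : (nbhdMatrix G) *ᵥ k =
            (chi A₂ ⬝ᵥ k) • chi A₁ + (chi A₁ ⬝ᵥ k) • chi A₂ := by
          have hh := hstar k
          rw [hk] at hh
          funext v
          have hv := congrFun hh.symm v
          simp only [Pi.add_apply, Pi.smul_apply, Pi.zero_apply, smul_eq_mul] at hv ⊢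
          have : ∀ a b c : ZMod 2, a + b + c = 0 → a = b + c := by decide
          exact this _ _ _ hv
        have ha : chi A₁ ⬝ᵥ k = (chi A₂ ⬝ᵥ k) + (chi A₁ ⬝ᵥ k) := by
          calc chi A₁ ⬝ᵥ k = k ⬝ᵥ ((nbhdMatrix G) *ᵥ r) := by
                rw [hr]; exact dotProduct_comm _ _
            _ = r ⬝ᵥ ((nbhdMatrix G) *ᵥ k) := symm_dot G k r
            _ = (chi A₂ ⬝ᵥ k) + (chi A₁ ⬝ᵥ k) := by
                rw [hm, dotProduct_add, dotProduct_smul, dotProduct_smul, smul_eq_mul,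
                  smul_eq_mul, dotProduct_comm r (chi A₁), dotProduct_comm r (chi A₂), ρ, α1,
                  mul_one, mul_one]
        have hb : chi A₂ ⬝ᵥ k = (chi A₂ ⬝ᵥ k) + (chi A₁ ⬝ᵥ k) := by
          calc chi A₂ ⬝ᵥ k = k ⬝ᵥ ((nbhdMatrix G) *ᵥ q) := by
                rw [hq]; exact dotProduct_comm _ _
            _ = q ⬝ᵥ ((nbhdMatrix G) *ᵥ k) := symm_dot G k q
            _ = (chi A₂ ⬝ᵥ k) + (chi A₁ ⬝ᵥ k) := by
                rw [hm, dotProduct_add, dotProduct_smul, dotProduct_smul, smul_eq_mul,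
                  smul_eq_mul, dotProduct_comm q (chi A₁), dotProduct_comm q (chi A₂), α2, κ,
                  mul_one, mul_one]
        have hz : ∀ a b : ZMod 2, a = b + a → b = 0 := by decide
        have hb0 : chi A₂ ⬝ᵥ k = 0 := hz _ _ ha
        have ha0 : chi A₁ ⬝ᵥ k = 0 := by
          have hz' : ∀ a b : ZMod 2, b = b + a → a = 0 := by decide
          exact hz' _ _ hb
        rw [hm, ha0, hb0, zero_smul, zero_smul, add_zero]
      · intro hk
        have ha : chi A₁ ⬝ᵥ k = 0 := by
          calc chi A₁ ⬝ᵥ k = k ⬝ᵥ ((nbhdMatrix G) *ᵥ r) := by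
                rw [hr]; exact dotProduct_comm _ _
            _ = r ⬝ᵥ ((nbhdMatrix G) *ᵥ k) := symm_dot G k r
            _ = 0 := by rw [hk, dotProduct_zero]
        have hb : chi A₂ ⬝ᵥ k = 0 := by
          calc chi A₂ ⬝ᵥ k = k ⬝ᵥ ((nbhdMatrix G) *ᵥ q) := by
                rw [hq]; exact dotProduct_comm _ _
            _ = q ⬝ᵥ ((nbhdMatrix G) *ᵥ k) := symm_dot G k q
            _ = 0 := by rw [hk, dotProduct_zero]
        rw [hstar k, hk, ha, hb, zero_smul, zero_smul, add_zero, add_zero]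
    unfold nullityM
    rw [hker]
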